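/- arXiv:2106.08652 — 3 statements merged into one kernel-verified Lean document; each statement's English description precedes it below -/
import Mathlib

section
/- In the setting of valid rankings with only upper-bound constraints, the set function H : 2^𝒰 → ℝ defined by H(E) = max_{r∈𝒮} ∑_{u∈E} V(r,u) is submodular: for all subsets A, B ⊆ 𝒰, H(A) + H(B) ≥ H(A∪B) + H(A∩B). -/
open Finset

/-- `v` is strictly greater than `w` in the lexicographic order. -/
def lexGT {n : ℕ} (v w : Fin n → ℝ) : Prop :=
  ∃ i, w i < v i ∧ ∀ j < i, v j = w j

/-- `v` is greater than or equal to `w` in the lexicographic order. -/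
def lexGE {n : ℕ} (v w : Fin n → ℝ) : Prop := v = w ∨ lexGT v w

/-- The vector `v` rearranged in increasing order. -/
noncomputable def sortedVec {n : ℕ} (v : Fin n → ℝ) : Fin n → ℝ :=
  v ∘ Tuple.sort v

/-- A probability distribution supported on the valid rankings `Vld`. -/
def IsDistribOn {U : Type*} [Fintype U] [DecidableEq U]
    (Vld : (U ≃ Fin (Fintype.card U)) → Prop) (p : (U ≃ Fin (Fintype.card U)) → ℝ) : Prop :=
  (∀ r, 0 ≤ p r) ∧ (∑ r : U ≃ Fin (Fintype.card U), p r = 1) ∧ (∀ r, p r ≠ 0 → Vld r)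

/-- Expected value `D[u] = E_{r∼p}[f(r(u)) - g(u)]` of individual `u` under distribution `p`. -/
def EV {U : Type*} [Fintype U] [DecidableEq U] (f : Fin (Fintype.card U) → ℝ) (g : U → ℝ)
    (p : (U ≃ Fin (Fintype.card U)) → ℝ) (u : U) : ℝ :=
  ∑ r : U ≃ Fin (Fintype.card U), p r * (f (r u) - g u)

/-- The vector of expected values, sorted in increasing order. -/
noncomputable def scovR {U : Type*} [Fintype U] [DecidableEq U]
    (f : Fin (Fintype.card U) → ℝ) (g : U → ℝ) (p : (U ≃ Fin (Fintype.card U)) → ℝ) :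
    Fin (Fintype.card U) → ℝ :=
  sortedVec (fun i => EV f g p ((Fintype.equivFin U).symm i))

/-- `F` is a maxmin-fair distribution over the valid rankings `Vld`. -/
def MaxminFair {U : Type*} [Fintype U] [DecidableEq U]
    (Vld : (U ≃ Fin (Fintype.card U)) → Prop) (f : Fin (Fintype.card U) → ℝ) (g : U → ℝ)
    (F : (U ≃ Fin (Fintype.card U)) → ℝ) : Prop :=
  IsDistribOn Vld F ∧ ∀ D, IsDistribOn Vld D → lexGE (scovR f g F) (scovR f g D)

/-- A ranking is valid if, for every prefix length `i` and class `k`, the number of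
individuals of class `k` in the top `i` positions is at most `ub i k`. -/
def ValidUB {U : Type*} [Fintype U] {t : ℕ} (c : U → Fin t)
    (ub : Fin (Fintype.card U) → Fin t → ℕ) (r : U ≃ Fin (Fintype.card U)) : Prop :=
  ∀ i : Fin (Fintype.card U), ∀ k : Fin t,
    (Finset.univ.filter (fun u => c u = k ∧ r u ≤ i)).card ≤ ub i k

/-- `Hfun Vld f g E` is the maximum over valid rankings `r` of `∑_{u ∈ E} (f (r u) - g u)`. -/
noncomputable def Hfun {U : Type*} [Fintype U] [DecidableEq U]
    (Vld : (U ≃ Fin (Fintype.card U)) → Prop)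
    (f : Fin (Fintype.card U) → ℝ) (g : U → ℝ) (E : Finset U) : ℝ :=
  sSup ((fun r : U ≃ Fin (Fintype.card U) => ∑ u ∈ E, (f (r u) - g u)) '' {r | Vld r})

set_option linter.unusedSectionVars false







namespace HfunSub

variable {U : Type*} [Fintype U] [DecidableEq U] {t : ℕ}

def cS (c : U → Fin t) (P : Finset U) (k : Fin t) : ℕ :=
  (P.filter fun u => c u = k).card

lemma cS_mono (c : U → Fin t) {P Q : Finset U} (h : P ⊆ Q) (k : Fin t) :
    cS c P k ≤ cS c Q k :=
  card_le_card (filter_subset_filter _ h)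

lemma sum_cS (c : U → Fin t) (P : Finset U) :
    ∑ k, cS c P k = P.card :=
  (card_eq_sum_card_fiberwise (fun x _ => mem_univ (c x))).symm

def PR (r : U ≃ Fin (Fintype.card U)) (ℓ : ℕ) : Finset U :=
  univ.filter fun u => (r u : ℕ) < ℓ

lemma PR_mono (r : U ≃ Fin (Fintype.card U)) {ℓ ℓ' : ℕ} (h : ℓ ≤ ℓ') :
    PR r ℓ ⊆ PR r ℓ' := by
  intro u hu
  simp only [PR, mem_filter, mem_univ, true_and] at hu ⊢
  omega

lemma PR_zero (r : U ≃ Fin (Fintype.card U)) : PR r 0 = ∅ := by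
  ext u; simp [PR]

lemma card_PR (r : U ≃ Fin (Fintype.card U)) {ℓ : ℕ} (h : ℓ ≤ Fintype.card U) :
    (PR r ℓ).card = ℓ := by
  classical
  have : (PR r ℓ).card = (Finset.range ℓ).card := by
    apply Finset.card_bij (fun u _ => (r u : ℕ))
    · intro u hu
      simp only [PR, mem_filter] at hu
      exact mem_range.2 hu.2
    · intro u hu v hv huv
      exact r.injective (Fin.ext huv)
    · intro m hm
      refine ⟨r.symm ⟨m, lt_of_lt_of_le (mem_range.1 hm) h⟩, ?_, ?_⟩
      · simp [PR, mem_range.1 hm]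
      · simp
  rw [this, card_range]

lemma sum_cS_PR (c : U → Fin t) (r : U ≃ Fin (Fintype.card U)) {ℓ : ℕ}
    (h : ℓ ≤ Fintype.card U) : ∑ k, cS c (PR r ℓ) k = ℓ := by
  rw [sum_cS, card_PR r h]

/-! ### caps -/

/-- `ub` extended to a total function on ℕ (junk value `n` beyond the range). -/
def ubN (ub : Fin (Fintype.card U) → Fin t → ℕ) (i : ℕ) (k : Fin t) : ℕ :=
  if h : i < Fintype.card U then ub ⟨i, h⟩ k else Fintype.card U

/-- effective cap for prefixes of length `ℓ ≥ 1` : min of all later upper bounds. -/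
def ubcap (ub : Fin (Fintype.card U) → Fin t → ℕ) (ℓ : ℕ) (k : Fin t) : ℕ :=
  (Finset.Icc (min (ℓ - 1) (Fintype.card U)) (Fintype.card U)).inf'
    (Finset.nonempty_Icc.mpr (min_le_right _ _)) (fun i => ubN ub i k)

/-- cap on the number of class-`k` elements in a prefix of length `ℓ` (0 when `ℓ = 0`). -/
def capL (c : U → Fin t) (ub : Fin (Fintype.card U) → Fin t → ℕ) (ℓ : ℕ) (k : Fin t) : ℕ :=
  if ℓ = 0 then 0 else min (cS c univ k) (ubcap ub ℓ k)

lemma ubcap_mono (ub : Fin (Fintype.card U) → Fin t → ℕ) {ℓ ℓ' : ℕ} (h : ℓ ≤ ℓ') (k : Fin t) :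
    ubcap ub ℓ k ≤ ubcap ub ℓ' k := by
  apply Finset.le_inf'
  intro i hi
  apply Finset.inf'_le
  simp only [mem_Icc] at hi ⊢
  omega

lemma capL_mono (c : U → Fin t) (ub : Fin (Fintype.card U) → Fin t → ℕ)
    {ℓ ℓ' : ℕ} (h : ℓ ≤ ℓ') (k : Fin t) : capL c ub ℓ k ≤ capL c ub ℓ' k := by
  unfold capL
  split_ifs with h1 h2
  · omega
  · omega
  · omega
  · exact min_le_min le_rfl (ubcap_mono ub h k)

lemma ubcap_le_ub (ub : Fin (Fintype.card U) → Fin t → ℕ) (i : Fin (Fintype.card U)) (k : Fin t) :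
    ubcap ub ((i : ℕ) + 1) k ≤ ub i k := by
  have h1 : (i : ℕ) ∈ Finset.Icc (min ((i : ℕ) + 1 - 1) (Fintype.card U)) (Fintype.card U) := by
    simp only [mem_Icc]
    constructor
    · omega
    · exact le_of_lt i.isLt
  have h2 := Finset.inf'_le (fun j => ubN ub j k) h1
  unfold ubcap
  refine le_trans h2 ?_
  rw [ubN, dif_pos i.isLt, Fin.eta]

/-- reformulation of the validity counts -/
lemma cnt_fin_eq (c : U → Fin t) (r : U ≃ Fin (Fintype.card U)) (i : Fin (Fintype.card U))
    (k : Fin t) :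
    (Finset.univ.filter (fun u => c u = k ∧ r u ≤ i)).card = cS c (PR r ((i : ℕ) + 1)) k := by
  unfold cS PR
  rw [filter_filter]
  congr 1
  ext u
  simp only [Fin.le_def, Nat.lt_succ_iff, and_comm]

lemma valid_cS_PR_le_ubcap {c : U → Fin t} {ub : Fin (Fintype.card U) → Fin t → ℕ}
    {r : U ≃ Fin (Fintype.card U)} (hr : ValidUB c ub r) {ℓ : ℕ}
    (hℓ : ℓ ≤ Fintype.card U) (k : Fin t) :
    cS c (PR r ℓ) k ≤ ubcap ub ℓ k := by
  apply Finset.le_inf'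
  intro i hi
  simp only [mem_Icc] at hi
  unfold ubN
  split_ifs with h
  · calc cS c (PR r ℓ) k ≤ cS c (PR r (i + 1)) k :=
          cS_mono c (PR_mono r (by omega)) k
      _ ≤ ub ⟨i, h⟩ k := by
          rw [← cnt_fin_eq c r ⟨i, h⟩ k]; exact hr ⟨i, h⟩ k
  · calc cS c (PR r ℓ) k ≤ (PR r ℓ).card := card_le_card (filter_subset _ _)
      _ = ℓ := card_PR r hℓ
      _ ≤ Fintype.card U := hℓ

lemma valid_cS_PR_le_capL {c : U → Fin t} {ub : Fin (Fintype.card U) → Fin t → ℕ}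
    {r : U ≃ Fin (Fintype.card U)} (hr : ValidUB c ub r) {ℓ : ℕ}
    (hℓ : ℓ ≤ Fintype.card U) (k : Fin t) :
    cS c (PR r ℓ) k ≤ capL c ub ℓ k := by
  unfold capL
  split_ifs with h
  · subst h; rw [PR_zero]; simp [cS]
  · exact le_min (cS_mono c (subset_univ _) k) (valid_cS_PR_le_ubcap hr hℓ k)

/-- total capacity at level ℓ is at least ℓ (uses nonemptiness of the valid set) -/
lemma capsum {c : U → Fin t} {ub : Fin (Fintype.card U) → Fin t → ℕ}
    {r0 : U ≃ Fin (Fintype.card U)} (hr0 : ValidUB c ub r0) {ℓ : ℕ}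
    (hℓ : ℓ ≤ Fintype.card U) : ℓ ≤ ∑ k, capL c ub ℓ k := by
  calc ℓ = ∑ k, cS c (PR r0 ℓ) k := (sum_cS_PR c r0 hℓ).symm
    _ ≤ ∑ k, capL c ub ℓ k := sum_le_sum fun k _ => valid_cS_PR_le_capL hr0 hℓ k


/-! ### the level coverage function `GN` -/

/-- Optimal number of elements of `E` that can appear in the first `ℓ` positions
of a valid ranking (closed form). -/
def GN (c : U → Fin t) (ub : Fin (Fintype.card U) → Fin t → ℕ) (E : Finset U) (ℓ : ℕ) : ℕ :=
  (Finset.range (ℓ + 1)).inf' ⟨0, mem_range.2 (Nat.succ_pos ℓ)⟩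
    (fun i => (ℓ - i) + ∑ k, min (cS c E k) (capL c ub i k))

lemma GN_le (c : U → Fin t) (ub : Fin (Fintype.card U) → Fin t → ℕ) (E : Finset U)
    {ℓ i : ℕ} (hi : i ≤ ℓ) :
    GN c ub E ℓ ≤ (ℓ - i) + ∑ k, min (cS c E k) (capL c ub i k) :=
  Finset.inf'_le _ (mem_range.2 (by omega))

lemma GN_exists (c : U → Fin t) (ub : Fin (Fintype.card U) → Fin t → ℕ) (E : Finset U)
    (ℓ : ℕ) : ∃ i ≤ ℓ, GN c ub E ℓ = (ℓ - i) + ∑ k, min (cS c E k) (capL c ub i k) := by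
  obtain ⟨i, him, hieq⟩ := Finset.exists_mem_eq_inf' (α := ℕ)
    (⟨0, mem_range.2 (Nat.succ_pos ℓ)⟩ : (Finset.range (ℓ + 1)).Nonempty)
    (fun i => (ℓ - i) + ∑ k, min (cS c E k) (capL c ub i k))
  exact ⟨i, by have := mem_range.1 him; omega, hieq⟩

/-! ### the greedy construction -/

section Greedy

variable [Nonempty U]
variable (c : U → Fin t) (ub : Fin (Fintype.card U) → Fin t → ℕ) (E : Finset U)

/-- elements that can be placed next (position `s+1`, so level `s+1`) given prefix `P`. -/
def Cand (s : ℕ) (P : Finset U) : Finset U :=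
  univ.filter fun u => u ∉ P ∧ cS c P (c u) + 1 ≤ capL c ub (s + 1) (c u)

noncomputable def pickg (s : ℕ) (P : Finset U) : U :=
  if h : ((Cand c ub s P).filter (· ∈ E)).Nonempty then h.choose
  else if h2 : (Cand c ub s P).Nonempty then h2.choose
  else Classical.arbitrary U

noncomputable def SG : ℕ → Finset U
  | 0 => ∅
  | s + 1 => insert (pickg c ub E s (SG s)) (SG s)

lemma pick_mem {s : ℕ} {P : Finset U} (h2 : (Cand c ub s P).Nonempty) :
    pickg c ub E s P ∈ Cand c ub s P := by
  unfold pickg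
  split_ifs with h
  · exact Finset.mem_of_mem_filter _ h.choose_spec
  · exact h2.choose_spec

lemma pick_priority {s : ℕ} {P : Finset U} (hp : pickg c ub E s P ∉ E) :
    ∀ u ∈ Cand c ub s P, u ∉ E := by
  intro u hu huE
  have hne : ((Cand c ub s P).filter (· ∈ E)).Nonempty := ⟨u, mem_filter.2 ⟨hu, huE⟩⟩
  have : pickg c ub E s P ∈ E := by
    unfold pickg
    rw [dif_pos hne]
    exact (mem_filter.1 hne.choose_spec).2
  exact hp this

lemma SG_mono {s s' : ℕ} (h : s ≤ s') : SG c ub E s ⊆ SG c ub E s' := by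
  induction s' with
  | zero =>
    have : s = 0 := by omega
    subst this; exact Finset.Subset.refl _
  | succ m ih =>
    rcases Nat.lt_or_ge s (m + 1) with h1 | h1
    · exact (ih (by omega)).trans (Finset.subset_insert _ _)
    · have : s = m + 1 := by omega
      subst this; exact Finset.Subset.refl _

lemma greedy_inv {r0 : U ≃ Fin (Fintype.card U)} (hr0 : ValidUB c ub r0) :
    ∀ s, s ≤ Fintype.card U →
      (SG c ub E s).card = s ∧
      (∀ k, cS c (SG c ub E s) k ≤ capL c ub s k) ∧
      (∀ k, cS c (SG c ub E s ∩ E) k = min (cS c (SG c ub E s) k) (cS c E k)) ∧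
      GN c ub E s ≤ (SG c ub E s ∩ E).card := by
  intro s
  induction s with
  | zero =>
    intro _
    refine ⟨by simp [SG], ?_, ?_, ?_⟩
    · intro k; simp [SG, cS, capL]
    · intro k; simp [SG, cS]
    · have h1 : GN c ub E 0 ≤ (0 - 0) + ∑ k, min (cS c E k) (capL c ub 0 k) :=
        GN_le c ub E le_rfl
      have h2 : (0:ℕ) - 0 + ∑ k, min (cS c E k) (capL c ub 0 k) = 0 := by simp [capL]
      have h3 : (SG c ub E 0 ∩ E).card = 0 := by simp [SG]
      omega
  | succ s ih =>
    intro hs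
    have hs' : s ≤ Fintype.card U := by omega
    obtain ⟨hcard, hcnt, heck, hcov⟩ := ih hs'
    -- availability of a candidate
    have hsum_cnt : ∑ k, cS c (SG c ub E s) k = s := by rw [sum_cS, hcard]
    have hcapsum : (s + 1 : ℕ) ≤ ∑ k, capL c ub (s + 1) k := capsum hr0 hs
    have hex : ∃ k, cS c (SG c ub E s) k < capL c ub (s + 1) k := by
      by_contra hcon
      push_neg at hcon
      have : ∑ k, capL c ub (s + 1) k ≤ ∑ k, cS c (SG c ub E s) k :=
        sum_le_sum fun k _ => hcon k
      omega
    obtain ⟨k0, hk0⟩ := hex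
    have hk0n : cS c (SG c ub E s) k0 < cS c univ k0 := by
      refine lt_of_lt_of_le hk0 ?_
      unfold capL
      rw [if_neg (Nat.succ_ne_zero s)]
      exact min_le_left _ _
    have hexu : ∃ u, u ∈ univ.filter (fun v => c v = k0) ∧
        u ∉ (SG c ub E s).filter (fun v => c v = k0) := by
      by_contra hcon
      push_neg at hcon
      have hsub : univ.filter (fun v => c v = k0) ⊆ (SG c ub E s).filter (fun v => c v = k0) :=
        fun u hu => hcon u hu
      have := card_le_card hsub
      unfold cS at hk0n
      omega
    obtain ⟨u0, hu0a, hu0b⟩ := hexu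
    have hu0class : c u0 = k0 := (mem_filter.1 hu0a).2
    have hu0notin : u0 ∉ SG c ub E s := fun hin => hu0b (mem_filter.2 ⟨hin, hu0class⟩)
    have hcand : (Cand c ub s (SG c ub E s)).Nonempty := by
      refine ⟨u0, mem_filter.2 ⟨mem_univ _, hu0notin, ?_⟩⟩
      rw [hu0class]; omega
    have hpmem := pick_mem c ub E hcand
    set p := pickg c ub E s (SG c ub E s) with hpdef
    have hpC : p ∉ SG c ub E s ∧
        cS c (SG c ub E s) (c p) + 1 ≤ capL c ub (s + 1) (c p) := (mem_filter.1 hpmem).2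
    have hSGsucc : SG c ub E (s + 1) = insert p (SG c ub E s) := rfl
    have hfilter_ins : ∀ (Q : Finset U) (k : Fin t), p ∉ Q →
        cS c (insert p Q) k = (if c p = k then cS c Q k + 1 else cS c Q k) := by
      intro Q k hpQ
      unfold cS
      rw [Finset.filter_insert]
      split_ifs with h
      · exact card_insert_of_notMem fun hc => hpQ (Finset.mem_of_mem_filter _ hc)
      · rfl
    have hcard' : (SG c ub E (s + 1)).card = s + 1 := by
      rw [hSGsucc, card_insert_of_notMem hpC.1, hcard]
    have hcnt' : ∀ k, cS c (SG c ub E (s + 1)) k ≤ capL c ub (s + 1) k := by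
      intro k
      rw [hSGsucc, hfilter_ins _ k hpC.1]
      split_ifs with h
      · rw [← h]; exact hpC.2
      · exact (hcnt k).trans (capL_mono c ub (by omega) k)
    refine ⟨hcard', hcnt', ?_, ?_⟩
    · -- E-count invariant
      intro k
      by_cases hpE : p ∈ E
      · have hint : SG c ub E (s + 1) ∩ E = insert p (SG c ub E s ∩ E) := by
          rw [hSGsucc, Finset.insert_inter_of_mem hpE]
        have hpQ : p ∉ SG c ub E s ∩ E := fun hc => hpC.1 (Finset.mem_of_mem_inter_left hc)
        rw [hint, hfilter_ins _ k hpQ, hSGsucc, hfilter_ins _ k hpC.1]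
        by_cases h : c p = k
        · rw [if_pos h, if_pos h]
          have hlt : cS c (SG c ub E s ∩ E) k < cS c E k := by
            apply card_lt_card
            rw [Finset.ssubset_iff_of_subset
              (filter_subset_filter _ (Finset.inter_subset_right))]
            refine ⟨p, mem_filter.2 ⟨hpE, h⟩, fun hc => hpQ (Finset.mem_of_mem_filter _ hc)⟩
          have := heck k
          omega
        · rw [if_neg h, if_neg h]
          exact heck k
      · have hint : SG c ub E (s + 1) ∩ E = SG c ub E s ∩ E := by
          rw [hSGsucc, Finset.insert_inter_of_notMem hpE]
        rw [hint, hSGsucc, hfilter_ins _ k hpC.1]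
        by_cases h : c p = k
        · rw [if_pos h]
          have hsubE : ∀ u ∈ E, c u = k → u ∈ SG c ub E s := by
            intro u huE huk
            by_contra hun
            have hucand : u ∈ Cand c ub s (SG c ub E s) := by
              refine mem_filter.2 ⟨mem_univ _, hun, ?_⟩
              rw [huk, ← h]
              exact hpC.2
            exact pick_priority c ub E hpE u hucand huE
          have he_le : cS c E k ≤ cS c (SG c ub E s ∩ E) k := by
            apply card_le_card
            intro u hu
            have hu1 := (mem_filter.1 hu).1
            have hu2 := (mem_filter.1 hu).2
            exact mem_filter.2 ⟨Finset.mem_inter.2 ⟨hsubE u hu1 hu2, hu1⟩, hu2⟩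
          have := heck k
          omega
        · rw [if_neg h]
          exact heck k
    · -- coverage invariant
      by_cases hpE : p ∈ E
      · have hint : SG c ub E (s + 1) ∩ E = insert p (SG c ub E s ∩ E) := by
          rw [hSGsucc, Finset.insert_inter_of_mem hpE]
        have hpQ : p ∉ SG c ub E s ∩ E := fun hc => hpC.1 (Finset.mem_of_mem_inter_left hc)
        have hcard2 : (SG c ub E (s + 1) ∩ E).card = (SG c ub E s ∩ E).card + 1 := by
          rw [hint, card_insert_of_notMem hpQ]
        obtain ⟨i0, hi0le, hi0⟩ := GN_exists c ub E s
        have h1 : GN c ub E (s + 1) ≤ (s + 1 - i0) + ∑ k, min (cS c E k) (capL c ub i0 k) :=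
          GN_le c ub E (by omega)
        have h2 : (s + 1 - i0) + ∑ k, min (cS c E k) (capL c ub i0 k) = GN c ub E s + 1 := by
          rw [hi0]; omega
        omega
      · have hint : SG c ub E (s + 1) ∩ E = SG c ub E s ∩ E := by
          rw [hSGsucc, Finset.insert_inter_of_notMem hpE]
        have hkey : ∀ k, min (cS c E k) (capL c ub (s + 1) k) ≤ cS c (SG c ub E s ∩ E) k := by
          intro k
          by_cases hsub : ∀ u ∈ E, c u = k → u ∈ SG c ub E s
          · have he_le : cS c E k ≤ cS c (SG c ub E s ∩ E) k := by
              apply card_le_card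
              intro u hu
              have hu1 := (mem_filter.1 hu).1
              have hu2 := (mem_filter.1 hu).2
              exact mem_filter.2 ⟨Finset.mem_inter.2 ⟨hsub u hu1 hu2, hu1⟩, hu2⟩
            exact le_trans (min_le_left _ _) he_le
          · push_neg at hsub
            obtain ⟨u, huE, huk, hun⟩ := hsub
            have hnotcand : u ∉ Cand c ub s (SG c ub E s) :=
              fun hc => pick_priority c ub E hpE u hc huE
            have hcap_le : capL c ub (s + 1) k ≤ cS c (SG c ub E s) k := by
              by_contra hlt
              push_neg at hlt
              exact hnotcand (mem_filter.2 ⟨mem_univ _, hun, by rw [huk]; omega⟩)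
            have := heck k
            omega
        have hsum : ∑ k, min (cS c E k) (capL c ub (s + 1) k) ≤ (SG c ub E s ∩ E).card := by
          calc ∑ k, min (cS c E k) (capL c ub (s + 1) k)
              ≤ ∑ k, cS c (SG c ub E s ∩ E) k := sum_le_sum fun k _ => hkey k
            _ = (SG c ub E s ∩ E).card := sum_cS c _
        have h1 : GN c ub E (s + 1) ≤ (s + 1 - (s + 1)) + ∑ k, min (cS c E k) (capL c ub (s + 1) k) :=
          GN_le c ub E le_rfl
        rw [hint]
        omega

end Greedy


/-! ### extracting a ranking from the greedy construction -/

lemma exists_good_ranking (c : U → Fin t) (ub : Fin (Fintype.card U) → Fin t → ℕ)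
    (hn : 0 < Fintype.card U) {r0 : U ≃ Fin (Fintype.card U)} (hr0 : ValidUB c ub r0)
    (E : Finset U) :
    ∃ r : U ≃ Fin (Fintype.card U), ValidUB c ub r ∧
      ∀ ℓ ≤ Fintype.card U, GN c ub E ℓ ≤ (PR r ℓ ∩ E).card := by
  classical
  haveI : Nonempty U := Fintype.card_pos_iff.mp hn
  have hinv := greedy_inv c ub E hr0
  -- the final set is everything
  have hSGn : SG c ub E (Fintype.card U) = univ := by
    apply Finset.eq_univ_of_card
    exact (hinv (Fintype.card U) le_rfl).1
  have hfind : ∀ u : U, ∃ ℓ, u ∈ SG c ub E ℓ :=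
    fun u => ⟨Fintype.card U, by rw [hSGn]; exact mem_univ u⟩
  -- first time u appears
  have hfind_pos : ∀ u : U, 1 ≤ Nat.find (hfind u) := by
    intro u
    rcases Nat.eq_zero_or_pos (Nat.find (hfind u)) with h | h
    · exfalso
      have := Nat.find_spec (hfind u)
      rw [h] at this
      simp [SG] at this
    · exact h
  have hfind_le : ∀ u : U, Nat.find (hfind u) ≤ Fintype.card U := by
    intro u
    exact Nat.find_min' (hfind u) (by rw [hSGn]; exact mem_univ u)
  have hmem_iff : ∀ (u : U) (ℓ : ℕ), u ∈ SG c ub E ℓ ↔ Nat.find (hfind u) ≤ ℓ := by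
    intro u ℓ
    constructor
    · intro h; exact Nat.find_min' (hfind u) h
    · intro h; exact SG_mono c ub E h (Nat.find_spec (hfind u))
  set φ : U → Fin (Fintype.card U) := fun u => ⟨Nat.find (hfind u) - 1, by
    have h1 := hfind_pos u
    have h2 := hfind_le u
    omega⟩ with hφ
  have hφinj : Function.Injective φ := by
    intro u v huv
    have h1 := hfind_pos u
    have h2 := hfind_pos v
    have h3 : Nat.find (hfind u) - 1 = Nat.find (hfind v) - 1 := congrArg Fin.val huv
    have heq : Nat.find (hfind u) = Nat.find (hfind v) := by omega
    obtain ⟨m', hm'⟩ : ∃ m', Nat.find (hfind u) = m' + 1 := ⟨Nat.find (hfind u) - 1, by omega⟩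
    have hm'v : Nat.find (hfind v) = m' + 1 := by omega
    have hu_in : u ∈ SG c ub E (m' + 1) := hm' ▸ Nat.find_spec (hfind u)
    have hv_in : v ∈ SG c ub E (m' + 1) := hm'v ▸ Nat.find_spec (hfind v)
    have hu_not : u ∉ SG c ub E m' := fun hc => by
      have := (hmem_iff u m').1 hc; omega
    have hv_not : v ∉ SG c ub E m' := fun hc => by
      have := (hmem_iff v m').1 hc; omega
    have hins : SG c ub E (m' + 1) = insert (pickg c ub E m' (SG c ub E m')) (SG c ub E m') := rfl
    rw [hins, Finset.mem_insert] at hu_in hv_in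
    rcases hu_in with hu | hu
    · rcases hv_in with hv | hv
      · rw [hu, hv]
      · exact absurd hv hv_not
    · exact absurd hu hu_not
  have hφbij : Function.Bijective φ :=
    (Fintype.bijective_iff_injective_and_card φ).2 ⟨hφinj, by simp⟩
  set r : U ≃ Fin (Fintype.card U) := Equiv.ofBijective φ hφbij with hr
  have hrval : ∀ u : U, (r u : ℕ) = Nat.find (hfind u) - 1 := fun u => rfl
  have hkey : ∀ (u : U) (ℓ : ℕ), ((r u : ℕ) < ℓ ↔ u ∈ SG c ub E ℓ) := by
    intro u ℓ
    rw [hrval, hmem_iff]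
    have := hfind_pos u
    omega
  have hPR : ∀ ℓ : ℕ, PR r ℓ = SG c ub E ℓ := by
    intro ℓ
    ext u
    simp only [PR, mem_filter, mem_univ, true_and]
    exact hkey u ℓ
  refine ⟨r, ?_, ?_⟩
  · intro i k
    rw [cnt_fin_eq c r i k, hPR]
    have h1 : cS c (SG c ub E ((i : ℕ) + 1)) k ≤ capL c ub ((i : ℕ) + 1) k :=
      (hinv ((i : ℕ) + 1) i.isLt).2.1 k
    have h2 : capL c ub ((i : ℕ) + 1) k ≤ ubcap ub ((i : ℕ) + 1) k := by
      unfold capL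
      rw [if_neg (Nat.succ_ne_zero _)]
      exact min_le_right _ _
    exact h1.trans (h2.trans (ubcap_le_ub ub i k))
  · intro ℓ hℓ
    rw [hPR]
    exact (hinv ℓ hℓ).2.2.2


/-! ### Abel summation -/

noncomputable def FF (f : Fin (Fintype.card U) → ℝ) (j : ℕ) : ℝ :=
  if h : min j (Fintype.card U - 1) < Fintype.card U then f ⟨_, h⟩ else 0

noncomputable def cNj (f : Fin (Fintype.card U) → ℝ) (j : ℕ) : ℝ := FF f j - FF f (j + 1)

lemma FF_eq (hn : 0 < Fintype.card U) (f : Fin (Fintype.card U) → ℝ)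
    (p : Fin (Fintype.card U)) : FF f (p : ℕ) = f p := by
  have hlt : min (p : ℕ) (Fintype.card U - 1) < Fintype.card U := by
    have := p.isLt; omega
  rw [FF, dif_pos hlt]
  congr 1
  apply Fin.ext
  have := p.isLt
  simp only
  omega

lemma cNj_nonneg (hn : 0 < Fintype.card U) {f : Fin (Fintype.card U) → ℝ}
    (hf : Antitone f) (j : ℕ) : 0 ≤ cNj f j := by
  have h1 : min j (Fintype.card U - 1) < Fintype.card U := by omega
  have h2 : min (j + 1) (Fintype.card U - 1) < Fintype.card U := by omega
  rw [cNj, FF, FF, dif_pos h1, dif_pos h2, sub_nonneg]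
  apply hf
  rw [Fin.mk_le_mk]
  omega

lemma telescope (f : Fin (Fintype.card U) → ℝ) (b : ℕ) :
    ∀ a ≤ b, ∑ j ∈ Finset.Ico a b, cNj f j = FF f a - FF f b := by
  induction b with
  | zero =>
    intro a ha
    have : a = 0 := by omega
    subst this; simp
  | succ b ih =>
    intro a ha
    rcases Nat.lt_or_ge a (b + 1) with h | h
    · have ha' : a ≤ b := by omega
      rw [Finset.sum_Ico_succ_top ha', ih a ha', cNj]
      ring
    · have : a = b + 1 := by omega
      subst this; simp

lemma abel_sum (hn : 0 < Fintype.card U) (f : Fin (Fintype.card U) → ℝ)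
    (r : U ≃ Fin (Fintype.card U)) (X : Finset U) :
    ∑ u ∈ X, f (r u) =
      (X.card : ℝ) * FF f (Fintype.card U - 1) +
        ∑ j ∈ Finset.range (Fintype.card U - 1),
          ((X ∩ PR r (j + 1)).card : ℝ) * cNj f j := by
  have step1 : ∀ u : U, f (r u) = FF f (Fintype.card U - 1) +
      ∑ j ∈ Finset.Ico ((r u : ℕ)) (Fintype.card U - 1), cNj f j := by
    intro u
    have hle : (r u : ℕ) ≤ Fintype.card U - 1 := by have := (r u).isLt; omega
    rw [telescope f _ _ hle, FF_eq hn f (r u)]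
    ring
  have hIco : ∀ v : ℕ, Finset.Ico v (Fintype.card U - 1) =
      (Finset.range (Fintype.card U - 1)).filter (fun j => v ≤ j) := by
    intro v
    ext j
    simp only [Finset.mem_Ico, Finset.mem_filter, Finset.mem_range]
    omega
  calc ∑ u ∈ X, f (r u)
      = ∑ u ∈ X, (FF f (Fintype.card U - 1) +
          ∑ j ∈ Finset.Ico ((r u : ℕ)) (Fintype.card U - 1), cNj f j) :=
        Finset.sum_congr rfl fun u _ => step1 u
    _ = (X.card : ℝ) * FF f (Fintype.card U - 1) +
          ∑ u ∈ X, ∑ j ∈ Finset.Ico ((r u : ℕ)) (Fintype.card U - 1), cNj f j := by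
        rw [Finset.sum_add_distrib, Finset.sum_const, nsmul_eq_mul]
    _ = (X.card : ℝ) * FF f (Fintype.card U - 1) +
          ∑ j ∈ Finset.range (Fintype.card U - 1),
            ((X ∩ PR r (j + 1)).card : ℝ) * cNj f j := by
        congr 1
        calc ∑ u ∈ X, ∑ j ∈ Finset.Ico ((r u : ℕ)) (Fintype.card U - 1), cNj f j
            = ∑ u ∈ X, ∑ j ∈ Finset.range (Fintype.card U - 1),
                if (r u : ℕ) ≤ j then cNj f j else 0 := by
              refine Finset.sum_congr rfl fun u _ => ?_
              rw [hIco, Finset.sum_filter]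
          _ = ∑ j ∈ Finset.range (Fintype.card U - 1), ∑ u ∈ X,
                if (r u : ℕ) ≤ j then cNj f j else 0 := Finset.sum_comm
          _ = ∑ j ∈ Finset.range (Fintype.card U - 1),
                ((X ∩ PR r (j + 1)).card : ℝ) * cNj f j := by
              refine Finset.sum_congr rfl fun j _ => ?_
              rw [← Finset.sum_filter]
              have hset : X.filter (fun u => (r u : ℕ) ≤ j) = X ∩ PR r (j + 1) := by
                ext u
                simp only [Finset.mem_filter, Finset.mem_inter, PR, Finset.mem_filter,
                  mem_univ, true_and, Nat.lt_succ_iff]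
              rw [hset, Finset.sum_const, nsmul_eq_mul]

/-! ### the upper bound for arbitrary valid rankings -/

lemma m_le_GN {c : U → Fin t} {ub : Fin (Fintype.card U) → Fin t → ℕ}
    {r : U ≃ Fin (Fintype.card U)} (hr : ValidUB c ub r) (X : Finset U) {ℓ : ℕ}
    (hℓ : ℓ ≤ Fintype.card U) :
    (X ∩ PR r ℓ).card ≤ GN c ub X ℓ := by
  apply Finset.le_inf'
  intro i hi
  have hi' : i ≤ ℓ := by have := Finset.mem_range.1 hi; omega
  have hperk : ∀ k, cS c (X ∩ PR r ℓ) k + cS c (PR r i) k ≤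
      min (cS c X k) (capL c ub i k) + cS c (PR r ℓ) k := by
    intro k
    have hXi_le : cS c (X ∩ PR r i) k ≤ min (cS c X k) (capL c ub i k) := by
      apply le_min
      · exact cS_mono c Finset.inter_subset_left k
      · calc cS c (X ∩ PR r i) k ≤ cS c (PR r i) k := cS_mono c Finset.inter_subset_right k
          _ ≤ capL c ub i k := valid_cS_PR_le_capL hr (by omega) k
    have e1 : ((X ∩ PR r ℓ).filter (fun u => c u = k)) ∪ ((PR r i).filter (fun u => c u = k))
        ⊆ (PR r ℓ).filter (fun u => c u = k) := by
      intro u hu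
      rcases Finset.mem_union.1 hu with h | h
      · exact mem_filter.2 ⟨Finset.mem_of_mem_inter_right (mem_filter.1 h).1,
          (mem_filter.1 h).2⟩
      · exact mem_filter.2 ⟨PR_mono r hi' (mem_filter.1 h).1, (mem_filter.1 h).2⟩
    have e2 : ((X ∩ PR r ℓ).filter (fun u => c u = k)) ∩ ((PR r i).filter (fun u => c u = k))
        ⊆ (X ∩ PR r i).filter (fun u => c u = k) := by
      intro u hu
      have h1 := Finset.mem_of_mem_inter_left hu
      have h2 := Finset.mem_of_mem_inter_right hu
      exact mem_filter.2 ⟨Finset.mem_inter.2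
        ⟨Finset.mem_of_mem_inter_left (mem_filter.1 h1).1, (mem_filter.1 h2).1⟩,
        (mem_filter.1 h1).2⟩
    have hunion : cS c (X ∩ PR r ℓ) k + cS c (PR r i) k ≤
        cS c (PR r ℓ) k + cS c (X ∩ PR r i) k := by
      unfold cS
      rw [← Finset.card_union_add_card_inter]
      exact add_le_add (card_le_card e1) (card_le_card e2)
    omega
  have hsum := Finset.sum_le_sum (fun k (_ : k ∈ (univ : Finset (Fin t))) => hperk k)
  rw [Finset.sum_add_distrib, Finset.sum_add_distrib, sum_cS,
    sum_cS_PR c r (show i ≤ Fintype.card U by omega), sum_cS_PR c r hℓ] at hsum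
  omega

/-! ### the pairing (submodularity of GN) -/

lemma GN_pairing (c : U → Fin t) (ub : Fin (Fintype.card U) → Fin t → ℕ)
    (A B : Finset U) (ℓ : ℕ) :
    GN c ub (A ∪ B) ℓ + GN c ub (A ∩ B) ℓ ≤ GN c ub A ℓ + GN c ub B ℓ := by
  have hfacts : ∀ k, cS c (A ∩ B) k + cS c (A ∪ B) k = cS c A k + cS c B k ∧
      cS c (A ∩ B) k ≤ cS c A k ∧ cS c (A ∩ B) k ≤ cS c B k ∧
      cS c A k ≤ cS c (A ∪ B) k ∧ cS c B k ≤ cS c (A ∪ B) k := by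
    intro k
    refine ⟨?_, cS_mono c Finset.inter_subset_left k, cS_mono c Finset.inter_subset_right k,
      cS_mono c Finset.subset_union_left k, cS_mono c Finset.subset_union_right k⟩
    unfold cS
    rw [Finset.filter_union, Finset.filter_inter_distrib]
    have := Finset.card_union_add_card_inter (A.filter (fun u => c u = k))
      (B.filter (fun u => c u = k))
    omega
  have key : ∀ (X Y : Finset U) (i1 i2 : ℕ), i1 ≤ ℓ → i2 ≤ ℓ →
      (∀ k, capL c ub i1 k ≤ capL c ub i2 k) →
      (∀ k, cS c (A ∩ B) k + cS c (A ∪ B) k = cS c X k + cS c Y k ∧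
        cS c (A ∩ B) k ≤ cS c X k ∧ cS c (A ∩ B) k ≤ cS c Y k ∧
        cS c X k ≤ cS c (A ∪ B) k ∧ cS c Y k ≤ cS c (A ∪ B) k) →
      GN c ub (A ∪ B) ℓ + GN c ub (A ∩ B) ℓ ≤
        ((ℓ - i1) + ∑ k, min (cS c X k) (capL c ub i1 k)) +
        ((ℓ - i2) + ∑ k, min (cS c Y k) (capL c ub i2 k)) := by
    intro X Y i1 i2 hi1 hi2 hM hXY
    have h1 : GN c ub (A ∪ B) ℓ ≤ (ℓ - i1) + ∑ k, min (cS c (A ∪ B) k) (capL c ub i1 k) :=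
      GN_le c ub _ hi1
    have h2 : GN c ub (A ∩ B) ℓ ≤ (ℓ - i2) + ∑ k, min (cS c (A ∩ B) k) (capL c ub i2 k) :=
      GN_le c ub _ hi2
    have h3 : ∑ k, min (cS c (A ∪ B) k) (capL c ub i1 k) +
        ∑ k, min (cS c (A ∩ B) k) (capL c ub i2 k) ≤
        ∑ k, min (cS c X k) (capL c ub i1 k) + ∑ k, min (cS c Y k) (capL c ub i2 k) := by
      rw [← Finset.sum_add_distrib, ← Finset.sum_add_distrib]
      apply Finset.sum_le_sum
      intro k _
      have hf := hXY k
      have hMk := hM k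
      omega
    omega
  obtain ⟨i1, hi1le, hi1⟩ := GN_exists c ub A ℓ
  obtain ⟨i2, hi2le, hi2⟩ := GN_exists c ub B ℓ
  rcases le_total i1 i2 with h | h
  · have hres := key A B i1 i2 hi1le hi2le (fun k => capL_mono c ub h k) hfacts
    rw [← hi1, ← hi2] at hres
    exact hres
  · have hfacts' : ∀ k, cS c (A ∩ B) k + cS c (A ∪ B) k = cS c B k + cS c A k ∧
        cS c (A ∩ B) k ≤ cS c B k ∧ cS c (A ∩ B) k ≤ cS c A k ∧
        cS c B k ≤ cS c (A ∪ B) k ∧ cS c A k ≤ cS c (A ∪ B) k := by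
      intro k
      have := hfacts k
      omega
    have hres := key B A i2 i1 hi2le hi1le (fun k => capL_mono c ub h k) hfacts'
    rw [← hi1, ← hi2] at hres
    omega


/-! ### bounds on Hfun -/

lemma Hfun_upper (c : U → Fin t) (ub : Fin (Fintype.card U) → Fin t → ℕ)
    (f : Fin (Fintype.card U) → ℝ) (hf : Antitone f) (g : U → ℝ)
    (hn : 0 < Fintype.card U) {r0 : U ≃ Fin (Fintype.card U)} (hr0 : ValidUB c ub r0)
    (X : Finset U) :
    Hfun (ValidUB c ub) f g X ≤ (X.card : ℝ) * FF f (Fintype.card U - 1)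
      + ∑ j ∈ Finset.range (Fintype.card U - 1), (GN c ub X (j + 1) : ℝ) * cNj f j
      - ∑ u ∈ X, g u := by
  apply csSup_le
  · exact ⟨_, ⟨r0, hr0, rfl⟩⟩
  · rintro y ⟨r, hr, rfl⟩
    show ∑ u ∈ X, (f (r u) - g u) ≤ _
    rw [Finset.sum_sub_distrib, abel_sum hn f r X]
    have hmono : ∑ j ∈ Finset.range (Fintype.card U - 1),
        ((X ∩ PR r (j + 1)).card : ℝ) * cNj f j ≤
        ∑ j ∈ Finset.range (Fintype.card U - 1), (GN c ub X (j + 1) : ℝ) * cNj f j := by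
      apply Finset.sum_le_sum
      intro j hj
      apply mul_le_mul_of_nonneg_right _ (cNj_nonneg hn hf j)
      have hjn : j + 1 ≤ Fintype.card U := by
        have := Finset.mem_range.1 hj; omega
      exact_mod_cast m_le_GN hr X hjn
    linarith

lemma Hfun_lower (c : U → Fin t) (ub : Fin (Fintype.card U) → Fin t → ℕ)
    (f : Fin (Fintype.card U) → ℝ) (hf : Antitone f) (g : U → ℝ)
    (hn : 0 < Fintype.card U) {r0 : U ≃ Fin (Fintype.card U)} (hr0 : ValidUB c ub r0)
    (X : Finset U) :
    (X.card : ℝ) * FF f (Fintype.card U - 1)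
      + ∑ j ∈ Finset.range (Fintype.card U - 1), (GN c ub X (j + 1) : ℝ) * cNj f j
      - ∑ u ∈ X, g u ≤ Hfun (ValidUB c ub) f g X := by
  obtain ⟨r, hr, hcov⟩ := exists_good_ranking c ub hn hr0 X
  haveI : Finite (U ≃ Fin (Fintype.card U)) :=
    Finite.of_injective (fun e => (e : U → Fin (Fintype.card U))) (DFunLike.coe_injective)
  have hbdd : BddAbove ((fun r : U ≃ Fin (Fintype.card U) =>
      ∑ u ∈ X, (f (r u) - g u)) '' {r | ValidUB c ub r}) :=
    (Set.Finite.image _ (Set.toFinite _)).bddAbove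
  refine le_trans ?_ (le_csSup hbdd ⟨r, hr, rfl⟩)
  show _ ≤ ∑ u ∈ X, (f (r u) - g u)
  rw [Finset.sum_sub_distrib, abel_sum hn f r X]
  have hmono : ∑ j ∈ Finset.range (Fintype.card U - 1), (GN c ub X (j + 1) : ℝ) * cNj f j ≤
      ∑ j ∈ Finset.range (Fintype.card U - 1), ((X ∩ PR r (j + 1)).card : ℝ) * cNj f j := by
    apply Finset.sum_le_sum
    intro j hj
    apply mul_le_mul_of_nonneg_right _ (cNj_nonneg hn hf j)
    have hjn : j + 1 ≤ Fintype.card U := by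
      have := Finset.mem_range.1 hj; omega
    have := hcov (j + 1) hjn
    rw [Finset.inter_comm] at this
    exact_mod_cast this
  linarith

end HfunSub

/-- The set function `E ↦ max_{r ∈ 𝒮} ∑_{u ∈ E} V(r,u)` is submodular when the set of valid
rankings is defined by upper-bound constraints only. -/
theorem Hfun_submodular {U : Type*} [Fintype U] [DecidableEq U] {t : ℕ}
    (c : U → Fin t) (ub : Fin (Fintype.card U) → Fin t → ℕ)
    (f : Fin (Fintype.card U) → ℝ) (hf : Antitone f) (g : U → ℝ)
    (hS : ∃ r, ValidUB c ub r) :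
    ∀ A B : Finset U,
      Hfun (ValidUB c ub) f g (A ∪ B) + Hfun (ValidUB c ub) f g (A ∩ B) ≤
      Hfun (ValidUB c ub) f g A + Hfun (ValidUB c ub) f g B := by
  intro A B
  rcases Nat.eq_zero_or_pos (Fintype.card U) with hn | hn
  · haveI : IsEmpty U := Fintype.card_eq_zero_iff.mp hn
    have hA : A = ∅ := Finset.eq_empty_of_isEmpty A
    have hB : B = ∅ := Finset.eq_empty_of_isEmpty B
    rw [hA, hB]
    simp
  · obtain ⟨r0, hr0⟩ := hS
    have hub := fun X => HfunSub.Hfun_upper c ub f hf g hn hr0 X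
    have hlb := fun X => HfunSub.Hfun_lower c ub f hf g hn hr0 X
    have hc : ((A ∪ B).card : ℝ) + ((A ∩ B).card : ℝ) = (A.card : ℝ) + (B.card : ℝ) := by
      exact_mod_cast congrArg (Nat.cast : ℕ → ℝ) (Finset.card_union_add_card_inter A B)
    have hg : (∑ u ∈ A ∪ B, g u) + ∑ u ∈ A ∩ B, g u = (∑ u ∈ A, g u) + ∑ u ∈ B, g u :=
      Finset.sum_union_inter
    have hsums : ∑ j ∈ Finset.range (Fintype.card U - 1),
          (HfunSub.GN c ub (A ∪ B) (j + 1) : ℝ) * HfunSub.cNj f j +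
        ∑ j ∈ Finset.range (Fintype.card U - 1),
          (HfunSub.GN c ub (A ∩ B) (j + 1) : ℝ) * HfunSub.cNj f j ≤
        ∑ j ∈ Finset.range (Fintype.card U - 1),
          (HfunSub.GN c ub A (j + 1) : ℝ) * HfunSub.cNj f j +
        ∑ j ∈ Finset.range (Fintype.card U - 1),
          (HfunSub.GN c ub B (j + 1) : ℝ) * HfunSub.cNj f j := by
      rw [← Finset.sum_add_distrib, ← Finset.sum_add_distrib]
      apply Finset.sum_le_sum
      intro j _
      rw [← add_mul, ← add_mul]
      apply mul_le_mul_of_nonneg_right _ (HfunSub.cNj_nonneg hn hf j)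
      exact_mod_cast HfunSub.GN_pairing c ub A B (j + 1)
    calc Hfun (ValidUB c ub) f g (A ∪ B) + Hfun (ValidUB c ub) f g (A ∩ B)
        ≤ _ := add_le_add (hub (A ∪ B)) (hub (A ∩ B))
      _ ≤ ((A.card : ℝ) * HfunSub.FF f (Fintype.card U - 1)
            + ∑ j ∈ Finset.range (Fintype.card U - 1),
              (HfunSub.GN c ub A (j + 1) : ℝ) * HfunSub.cNj f j - ∑ u ∈ A, g u)
          + ((B.card : ℝ) * HfunSub.FF f (Fintype.card U - 1)
            + ∑ j ∈ Finset.range (Fintype.card U - 1),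
              (HfunSub.GN c ub B (j + 1) : ℝ) * HfunSub.cNj f j - ∑ u ∈ B, g u) := by
          have hcF : ((A ∪ B).card : ℝ) * HfunSub.FF f (Fintype.card U - 1)
              + ((A ∩ B).card : ℝ) * HfunSub.FF f (Fintype.card U - 1)
              = (A.card : ℝ) * HfunSub.FF f (Fintype.card U - 1)
              + (B.card : ℝ) * HfunSub.FF f (Fintype.card U - 1) := by
            rw [← add_mul, ← add_mul, hc]
          linarith [hcF, hg, hsums]
      _ ≤ Hfun (ValidUB c ub) f g A + Hfun (ValidUB c ub) f g B :=
          add_le_add (hlb A) (hlb B)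
end

section
/- Let 𝒰 be a finite set and J : 2^𝒰 → ℝ a submodular set function (J(A) + J(B) ≥ J(A∪B) + J(A∩B) for all A, B) with J(∅) = 0. If X and Y are nonempty subsets of 𝒰 both achieving the minimum of J(Z)/|Z| over nonempty subsets Z ⊆ 𝒰, then X ∪ Y also achieves this minimum. -/
open Finset

/-- If `X` and `Y` are nonempty sets both minimizing `J(Z)/|Z|` over nonempty subsets `Z`
of a finite set, where `J` is submodular with `J ∅ = 0`, then `X ∪ Y` also minimizes it. -/
theorem union_minimizes_ratio {U : Type*} [Fintype U] [DecidableEq U]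
    (J : Finset U → ℝ)
    (hsub : ∀ A B : Finset U, J (A ∪ B) + J (A ∩ B) ≤ J A + J B)
    (h0 : J ∅ = 0)
    (X Y : Finset U) (hX : X.Nonempty) (hY : Y.Nonempty)
    (hXmin : ∀ Z : Finset U, Z.Nonempty → J X / (X.card : ℝ) ≤ J Z / (Z.card : ℝ))
    (hYmin : ∀ Z : Finset U, Z.Nonempty → J Y / (Y.card : ℝ) ≤ J Z / (Z.card : ℝ)) :
    ∀ Z : Finset U, Z.Nonempty →
      J (X ∪ Y) / ((X ∪ Y).card : ℝ) ≤ J Z / (Z.card : ℝ) := by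
  intro Z hZ
  set m := J X / (X.card : ℝ) with hm
  have hXc : (0:ℝ) < X.card := by exact_mod_cast card_pos.mpr hX
  have hYc : (0:ℝ) < Y.card := by exact_mod_cast card_pos.mpr hY
  have hUne : (X ∪ Y).Nonempty := hX.mono subset_union_left
  have hUc : (0:ℝ) < (X ∪ Y).card := by exact_mod_cast card_pos.mpr hUne
  have hmY : m = J Y / (Y.card : ℝ) := le_antisymm (hXmin Y hY) (hYmin X hX)
  have hJX : J X = m * X.card := by rw [hm, div_mul_cancel₀ _ hXc.ne']
  have hJY : J Y = m * Y.card := by rw [hmY, div_mul_cancel₀ _ hYc.ne']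
  have hint : m * (X ∩ Y).card ≤ J (X ∩ Y) := by
    rcases (X ∩ Y).eq_empty_or_nonempty with h | h
    · simp [h, h0]
    · have hc : (0:ℝ) < (X ∩ Y).card := by exact_mod_cast card_pos.mpr h
      have := hXmin (X ∩ Y) h
      rw [hm, div_le_div_iff₀ hXc hc] at this
      nlinarith
  have hcard : ((X ∪ Y).card : ℝ) + (X ∩ Y).card = X.card + Y.card := by
    exact_mod_cast card_union_add_card_inter X Y
  have hkey := hsub X Y
  have hmul : m * ((X ∪ Y).card : ℝ) + m * ((X ∩ Y).card : ℝ) = m * X.card + m * Y.card := by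
    rw [← mul_add, hcard, mul_add]
  have hU : J (X ∪ Y) ≤ m * (X ∪ Y).card := by linarith
  calc J (X ∪ Y) / ((X ∪ Y).card : ℝ) ≤ m := by
        rw [div_le_iff₀ hUc]; linarith
    _ ≤ J Z / (Z.card : ℝ) := hXmin Z hZ
end

section
/- Let 𝒰 be a nonempty finite set, 𝒮 a nonempty finite set, and V : 𝒮 × 𝒰 → ℝ. Suppose r' ∈ 𝒮 satisfies, for every real M > 0 and every r ∈ 𝒮, ∑_{u∈𝒰} (−exp(−M·V(r',u))) ≥ ∑_{u∈𝒰} (−exp(−M·V(r,u))). Then r' maximizes the minimum value: for every r ∈ 𝒮, min_{u∈𝒰} V(r',u) ≥ min_{u∈𝒰} V(r,u). -/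
open Finset

/-- If `r'` maximizes `∑_u -exp(-M · V(r,u))` over `r ∈ 𝒮` for every `M > 0`, then `r'`
maximizes the minimum value `min_u V(r,u)`. -/
theorem softmin_maximizer_maximizes_min {S U : Type*} [Fintype S] [Fintype U]
    [Nonempty S] [Nonempty U] (V : S → U → ℝ) (r' : S)
    (h : ∀ M : ℝ, 0 < M → ∀ r : S,
      ∑ u : U, -Real.exp (-M * V r u) ≤ ∑ u : U, -Real.exp (-M * V r' u)) :
    ∀ r : S,
      Finset.univ.inf' Finset.univ_nonempty (V r) ≤
        Finset.univ.inf' Finset.univ_nonempty (V r') := by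
  intro r
  by_contra hcon
  push_neg at hcon
  set a := Finset.univ.inf' Finset.univ_nonempty (V r') with ha
  set b := Finset.univ.inf' Finset.univ_nonempty (V r) with hb
  have hab : a < b := hcon
  have hcard : (1 : ℝ) ≤ (Fintype.card U : ℝ) := by
    exact_mod_cast Fintype.card_pos
  have hlog : 0 ≤ Real.log (Fintype.card U) := Real.log_nonneg hcard
  set M : ℝ := (Real.log (Fintype.card U) + 1) / (b - a) with hM
  have hMpos : 0 < M := div_pos (by linarith) (by linarith)
  have key := h M hMpos r
  -- rewrite sums without negation
  have key' : ∑ u : U, Real.exp (-M * V r' u) ≤ ∑ u : U, Real.exp (-M * V r u) := by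
    have := neg_le_neg key
    simpa [Finset.sum_neg_distrib] using this
  -- witness for a
  obtain ⟨u0, -, hu0⟩ := Finset.exists_mem_eq_inf' (Finset.univ_nonempty) (V r')
  have hL : Real.exp (-M * a) ≤ ∑ u : U, Real.exp (-M * V r' u) := by
    have : Real.exp (-M * V r' u0) = Real.exp (-M * a) := by rw [← hu0, ha]
    calc Real.exp (-M * a) = Real.exp (-M * V r' u0) := this.symm
      _ ≤ ∑ u : U, Real.exp (-M * V r' u) :=
        Finset.single_le_sum (f := fun u => Real.exp (-M * V r' u)) (fun u _ => (Real.exp_pos _).le) (Finset.mem_univ u0)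
  have hR : ∑ u : U, Real.exp (-M * V r u) ≤ (Fintype.card U : ℝ) * Real.exp (-M * b) := by
    calc ∑ u : U, Real.exp (-M * V r u) ≤ ∑ _u : U, Real.exp (-M * b) := by
          apply Finset.sum_le_sum
          intro u _
          apply Real.exp_le_exp.mpr
          have : b ≤ V r u := Finset.inf'_le _ (Finset.mem_univ u)
          nlinarith [hMpos]
      _ = (Fintype.card U : ℝ) * Real.exp (-M * b) := by
          simp [Finset.sum_const, nsmul_eq_mul, Finset.card_univ]
  have hmain : Real.exp (-M * a) ≤ (Fintype.card U : ℝ) * Real.exp (-M * b) :=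
    le_trans hL (le_trans key' hR)
  -- derive contradiction: exp(M(b-a)) ≤ card, but M(b-a) = log card + 1
  have hMba : M * (b - a) = Real.log (Fintype.card U) + 1 := by
    rw [hM]
    exact div_mul_cancel₀ _ ((by linarith : (0:ℝ) < b - a).ne')
  have hdiv : Real.exp (M * (b - a)) ≤ (Fintype.card U : ℝ) := by
    have hepos : 0 < Real.exp (-M * b) := Real.exp_pos _
    have : Real.exp (-M * a) / Real.exp (-M * b) ≤ (Fintype.card U : ℝ) := by
      rw [div_le_iff₀ hepos]; linarith
    calc Real.exp (M * (b - a)) = Real.exp (-M * a) / Real.exp (-M * b) := by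
          rw [← Real.exp_sub]; ring_nf
      _ ≤ _ := this
  have hgt : (Fintype.card U : ℝ) < Real.exp (M * (b - a)) := by
    rw [hMba, Real.exp_add, Real.exp_log (by linarith)]
    nlinarith [Real.add_one_lt_exp (one_ne_zero)]
  linarith
end
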